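/- Assume μ_n < 0 (the defocusing case). Then g(β) < 0 for all β < μ_1, f is strictly decreasing on (−∞, μ_1), and f maps (−∞, μ_1) bijectively onto the interval (−1, −1 + 2/(n−1)). In particular, for every real λ the equation f(β) = λ has a solution β ∈ (−∞, μ_1) if and only if −1 < λ < −1 + 2/(n−1), and in that case the solution is unique. -/

import Mathlib

open Set Finset

/-- Defocusing case: `g < 0` on `(-∞, μ₁)`, `f` is strictly decreasing there and maps
`(-∞, μ₁)` bijectively onto `(-1, -1 + 2/(n-1))`; hence `f(β) = λ` is solvable in
`(-∞, μ₁)` iff `-1 < λ < -1 + 2/(n-1)`, and then the solution is unique. -/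
theorem defocusing_f_bijective (n : ℕ) (hn : 2 ≤ n) (μ : Fin n → ℝ) (hμ : Monotone μ)
    (g : ℝ → ℝ)
    (hg : ∀ β : ℝ, (∀ j, β ≠ μ j) → g β = 1 + β * ∑ j, 1 / (μ j - β))
    (f : ℝ → ℝ)
    (hf : ∀ β : ℝ, g β ≠ 0 → f β = -1 - 2 / g β)
    (hdef : μ ⟨n - 1, by omega⟩ < 0) :
    (∀ β : ℝ, β < μ ⟨0, by omega⟩ → g β < 0) ∧
    StrictAntiOn f (Iio (μ ⟨0, by omega⟩)) ∧
    Set.BijOn f (Iio (μ ⟨0, by omega⟩)) (Ioo (-1 : ℝ) (-1 + 2 / ((n : ℝ) - 1))) ∧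
    (∀ lam : ℝ, (∃ β : ℝ, β < μ ⟨0, by omega⟩ ∧ f β = lam) ↔
      (-1 < lam ∧ lam < -1 + 2 / ((n : ℝ) - 1))) ∧
    (∀ lam : ℝ, -1 < lam → lam < -1 + 2 / ((n : ℝ) - 1) →
      ∃! β : ℝ, β < μ ⟨0, by omega⟩ ∧ f β = lam) := by
  have hn0 : 0 < n := by omega
  have hncast : (2:ℝ) ≤ (n:ℝ) := by exact_mod_cast hn
  set i0 : Fin n := ⟨0, by omega⟩ with hi0
  haveI : Nonempty (Fin n) := ⟨i0⟩
  set m : ℝ := μ i0 with hm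
  have hμle : ∀ j : Fin n, m ≤ μ j := by
    intro j
    exact hμ (by rw [Fin.le_def]; exact Nat.zero_le _)
  have hμneg : ∀ j : Fin n, μ j < 0 := by
    intro j
    have hj : j ≤ (⟨n - 1, by omega⟩ : Fin n) := by
      rw [Fin.le_def]
      have := j.isLt
      simp only []
      omega
    exact lt_of_le_of_lt (hμ hj) hdef
  have hmneg : m < 0 := hμneg i0
  have hpos : ∀ β : ℝ, β < m → ∀ j, 0 < μ j - β := by
    intro β hβ j
    have := hμle j; linarith
  have hne : ∀ β : ℝ, β < m → ∀ j, β ≠ μ j := by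
    intro β hβ j
    exact ne_of_lt (lt_of_lt_of_le hβ (hμle j))
  have hgeq : ∀ β : ℝ, β < m → g β = 1 + ∑ j, β / (μ j - β) := by
    intro β hβ
    rw [hg β (hne β hβ), Finset.mul_sum]
    simp only [mul_one_div]
  -- each term is < -1
  have hterm_lt : ∀ β : ℝ, β < m → ∀ j, β / (μ j - β) < -1 := by
    intro β hβ j
    rw [div_lt_iff₀ (hpos β hβ j)]
    have := hμneg j
    nlinarith
  -- g < 1 - n on (-∞, m)
  have hglt : ∀ β : ℝ, β < m → g β < 1 - n := by
    intro β hβ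
    rw [hgeq β hβ]
    have h2 : ∑ j, β / (μ j - β) < ∑ _j : Fin n, (-1 : ℝ) :=
      Finset.sum_lt_sum_of_nonempty Finset.univ_nonempty
        (fun j _ => hterm_lt β hβ j)
    rw [Finset.sum_const, Finset.card_univ, Fintype.card_fin, nsmul_eq_mul] at h2
    linarith
  have hgneg : ∀ β : ℝ, β < m → g β < -1 := by
    intro β hβ
    have := hglt β hβ
    linarith
  have hgne : ∀ β : ℝ, β < m → g β ≠ 0 := by
    intro β hβ
    have := hgneg β hβ; linarith
  -- g strictly decreasing on (-∞, m)
  have hganti : StrictAntiOn g (Iio m) := by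
    intro a ha b hb hab
    rw [Set.mem_Iio] at ha hb
    rw [hgeq a ha, hgeq b hb]
    have h : ∑ j, b / (μ j - b) < ∑ j, a / (μ j - a) := by
      apply Finset.sum_lt_sum_of_nonempty Finset.univ_nonempty
      intro j _
      rw [div_lt_div_iff₀ (hpos b hb j) (hpos a ha j)]
      have h1 := hμneg j
      nlinarith [mul_neg_of_pos_of_neg (sub_pos.mpr hab) h1]
    linarith
  -- explicit points with prescribed ratio β/(m-β)
  have hpoint : ∀ r : ℝ, r < -1 →
      r * m / (1 + r) < m ∧ (r * m / (1 + r)) / (m - r * m / (1 + r)) = r := by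
    intro r hr
    have h1r : 1 + r < 0 := by linarith
    constructor
    · rw [div_lt_iff_of_neg h1r]
      nlinarith
    · have hmne : m ≠ 0 := ne_of_lt hmneg
      have h1rne : (1 + r) ≠ 0 := ne_of_lt h1r
      have hden : m - r * m / (1 + r) = m / (1 + r) := by
        field_simp
        ring
      rw [hden]
      field_simp
  -- surjectivity of g onto (-∞, 1-n)
  have hgsurj : ∀ t : ℝ, t < 1 - n → ∃ β : ℝ, β < m ∧ g β = t := by
    intro t ht
    -- lower endpoint a : g a ≥ t
    have hnpos : (0:ℝ) < n := by linarith
    set u : ℝ := (t - 1) / n with hu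
    have hu1 : u < -1 := by
      rw [hu, div_lt_iff₀ hnpos]
      linarith
    obtain ⟨haltm, haratio⟩ := hpoint u hu1
    set a : ℝ := u * m / (1 + u) with hadef
    have hga : t ≤ g a := by
      rw [hgeq a haltm]
      have hterm : ∀ j ∈ Finset.univ, u ≤ a / (μ j - a) := by
        intro j _
        rw [← haratio]
        have h1 : 0 < m - a := by linarith
        have h2 : 0 < μ j - a := hpos a haltm j
        rw [div_le_div_iff₀ h1 h2]
        have h3 := hμle j
        have h4 : a < 0 := by linarith
        nlinarith
      have hsum : ∑ _j : Fin n, u ≤ ∑ j, a / (μ j - a) :=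
        Finset.sum_le_sum hterm
      rw [Finset.sum_const, Finset.card_univ, Fintype.card_fin, nsmul_eq_mul] at hsum
      have : (n:ℝ) * u = t - 1 := by
        rw [hu]; field_simp
      linarith
    -- upper endpoint b : g b ≤ t
    set d : ℝ := t + n - 2 with hd
    have hd1 : d < -1 := by rw [hd]; linarith
    obtain ⟨hbltm, hbratio⟩ := hpoint d hd1
    set b : ℝ := d * m / (1 + d) with hbdef
    have hgb : g b ≤ t := by
      rw [hgeq b hbltm]
      have hsplit : (b / (μ i0 - b)) + ∑ j ∈ Finset.univ.erase i0, b / (μ j - b)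
          = ∑ j, b / (μ j - b) :=
        Finset.add_sum_erase _ (fun j => b / (μ j - b)) (Finset.mem_univ i0)
      have hrest : ∑ j ∈ Finset.univ.erase i0, b / (μ j - b)
          ≤ ∑ _j ∈ Finset.univ.erase i0, (-1 : ℝ) :=
        Finset.sum_le_sum (fun j _ => le_of_lt (hterm_lt b hbltm j))
      have hcard : (Finset.univ.erase i0).card = n - 1 := by
        rw [Finset.card_erase_of_mem (Finset.mem_univ i0), Finset.card_univ,
          Fintype.card_fin]
      rw [Finset.sum_const, hcard, nsmul_eq_mul] at hrest
      have hcastn1 : ((n - 1 : ℕ) : ℝ) = (n:ℝ) - 1 := by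
        have : (1:ℕ) ≤ n := by omega
        push_cast [this]
        ring
      rw [hcastn1] at hrest
      have hi0term : b / (μ i0 - b) = d := by rw [← hm]; exact hbratio
      have : ∑ j, b / (μ j - b) ≤ d + ((n:ℝ) - 1) * (-1) := by
        rw [← hsplit, hi0term]
        linarith
      linarith [this]
    -- a ≤ b
    have hab : a ≤ b := by
      by_contra h
      push_neg at h
      have := hganti (Set.mem_Iio.mpr hbltm) (Set.mem_Iio.mpr haltm) h
      linarith
    -- continuity on [a, b]
    have hsub : Icc a b ⊆ Iio m := fun x hx => lt_of_le_of_lt hx.2 hbltm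
    have hGcont : ContinuousOn (fun β : ℝ => 1 + β * ∑ j, 1 / (μ j - β)) (Icc a b) := by
      apply continuousOn_const.add
      apply continuousOn_id.mul
      apply continuousOn_finset_sum
      intro j _
      exact continuousOn_const.div (continuousOn_const.sub continuousOn_id)
        (fun x hx => (hpos x (hsub hx) j).ne')
    have hgcont : ContinuousOn g (Icc a b) :=
      hGcont.congr (fun x hx => hg x (hne x (hsub hx)))
    have hivt := intermediate_value_Icc' hab hgcont
    have htmem : t ∈ Icc (g b) (g a) := ⟨hgb, hga⟩
    obtain ⟨β, hβmem, hβeq⟩ := hivt htmem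
    exact ⟨β, lt_of_le_of_lt hβmem.2 hbltm, hβeq⟩
  -- properties of f
  have hfanti : StrictAntiOn f (Iio m) := by
    intro a ha b hb hab
    rw [Set.mem_Iio] at ha hb
    rw [hf a (hgne a ha), hf b (hgne b hb)]
    have h1 : g b < g a := hganti (Set.mem_Iio.mpr ha) (Set.mem_Iio.mpr hb) hab
    have h2 : g a < 0 := by have := hgneg a ha; linarith
    have h3 : g b < 0 := by linarith
    have hkey : 2 / g a < 2 / g b := by
      have hdiff : 2 / g a - 2 / g b = 2 * (g b - g a) / (g a * g b) := by
        field_simp [h2.ne, h3.ne]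
      have : 2 * (g b - g a) / (g a * g b) < 0 :=
        div_neg_of_neg_of_pos (by linarith) (mul_pos_of_neg_of_neg h2 h3)
      linarith
    linarith
  have hfmaps : ∀ β : ℝ, β < m → f β ∈ Ioo (-1 : ℝ) (-1 + 2 / ((n:ℝ) - 1)) := by
    intro β hβ
    rw [hf β (hgne β hβ)]
    have h1 : g β < 1 - n := hglt β hβ
    have h2 : g β < 0 := by linarith
    have h3 : (0:ℝ) < (n:ℝ) - 1 := by linarith
    constructor
    · have : 2 / g β < 0 := div_neg_of_pos_of_neg (by norm_num) h2
      linarith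
    · have hgn : (n:ℝ) - 1 < -g β := by linarith
      have : 2 / (-g β) < 2 / ((n:ℝ) - 1) :=
        div_lt_div_of_pos_left (by norm_num) h3 hgn
      rw [div_neg] at this
      linarith
  have hfsurj : ∀ lam : ℝ, -1 < lam → lam < -1 + 2 / ((n:ℝ) - 1) →
      ∃ β : ℝ, β < m ∧ f β = lam := by
    intro lam h1 h2
    have h3 : (0:ℝ) < (n:ℝ) - 1 := by linarith
    have hl1 : 0 < lam + 1 := by linarith
    have hl2 : lam + 1 < 2 / ((n:ℝ) - 1) := by linarith
    set t : ℝ := -2 / (lam + 1) with htdef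
    have hmul : (lam + 1) * ((n:ℝ) - 1) < 2 := by
      have := (lt_div_iff₀ h3).mp hl2
      linarith
    have ht : t < 1 - n := by
      rw [htdef, div_lt_iff₀ hl1]
      nlinarith
    obtain ⟨β, hβ, hgβ⟩ := hgsurj t ht
    refine ⟨β, hβ, ?_⟩
    rw [hf β (hgne β hβ), hgβ, htdef]
    field_simp
    ring
  refine ⟨?_, ?_, ?_, ?_, ?_⟩
  · intro β hβ
    have := hgneg β hβ
    linarith
  · exact hfanti
  · refine ⟨fun β hβ => hfmaps β hβ, hfanti.injOn, ?_⟩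
    intro lam hlam
    obtain ⟨β, hβ, hfβ⟩ := hfsurj lam hlam.1 hlam.2
    exact ⟨β, hβ, hfβ⟩
  · intro lam
    constructor
    · rintro ⟨β, hβ, rfl⟩
      exact ⟨(hfmaps β hβ).1, (hfmaps β hβ).2⟩
    · rintro ⟨h1, h2⟩
      exact hfsurj lam h1 h2
  · intro lam h1 h2
    obtain ⟨β, hβ, hfβ⟩ := hfsurj lam h1 h2
    refine ⟨β, ⟨hβ, hfβ⟩, ?_⟩
    rintro y ⟨hy, hfy⟩
    exact hfanti.injOn (Set.mem_Iio.mpr hy) (Set.mem_Iio.mpr hβ) (hfy.trans hfβ.symm)
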